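/- For every integer k ≥ 0, the Laurent polynomial Y⁻¹t⁻¹·[(I − Yt)·Q_{−(3k+1)}(t)·Yt − (X⁻¹Y⁻¹)^{3k+1}·t^{−(6k+2)}]·(I − Xt) is twin. -/

import Mathlib

/-- The image of (123) under the irreducible 3-dimensional integral representation of A₄. -/
def Xm : Matrix (Fin 3) (Fin 3) ℤ := !![-1, 1, 0; -1, 0, 0; -1, 0, 1]

/-- The image of (142) under the irreducible 3-dimensional integral representation of A₄. -/
def Ym : Matrix (Fin 3) (Fin 3) ℤ := !![0, 0, -1; 0, 1, -1; 1, 0, -1]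

/-- The inverse of `Xm`, which equals `Xm ^ 2`. -/
def Xinv : Matrix (Fin 3) (Fin 3) ℤ := Xm ^ 2

/-- The inverse of `Ym`, which equals `Ym ^ 2`. -/
def Yinv : Matrix (Fin 3) (Fin 3) ℤ := Ym ^ 2

open LaurentPolynomial Finset

/-- 3×3 integer matrices. -/
abbrev M3 : Type := Matrix (Fin 3) (Fin 3) ℤ

/-- Laurent polynomials in `t` with coefficients in `M3`. -/
abbrev L : Type := LaurentPolynomial M3

/-- A Laurent polynomial `f = ∑ d_j t^j` with 3×3 integer matrix coefficients is *twin* if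
`d_j = c_j I + c_j' (XYX)` for `j ≡ 0 (mod 3)`, `d_j = a_j (X+Y)` for `j ≡ 1 (mod 3)`,
`d_j = b_j (X⁻¹+Y⁻¹)` for `j ≡ 2 (mod 3)`, and `a_{3j+1} = b_{3j+2}` for all `j`. -/
def IsTwin (f : L) : Prop :=
  ∃ c c' a b : ℤ → ℤ,
    (∀ j : ℤ, j % 3 = 0 → f.coeff j = c j • (1 : M3) + c' j • (Xm * Ym * Xm)) ∧
    (∀ j : ℤ, j % 3 = 1 → f.coeff j = a j • (Xm + Ym)) ∧
    (∀ j : ℤ, j % 3 = 2 → f.coeff j = b j • (Xinv + Yinv)) ∧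
    (∀ j : ℤ, a (3 * j + 1) = b (3 * j + 2))

/-- `Q m = ∑_{i=0}^m (YX)^i t^{2i}` for `m ≥ 0` and
`Q (-m) = ∑_{i=1}^m (X⁻¹Y⁻¹)^i t^{-2i}` for `m ≥ 1`. -/
noncomputable def Q (m : ℤ) : L :=
  if 0 ≤ m then ∑ i ∈ Finset.range (m.toNat + 1), C ((Ym * Xm) ^ i) * T (2 * (i : ℤ))
  else ∑ i ∈ Finset.range (-m).toNat, C ((Xinv * Yinv) ^ (i + 1)) * T (-(2 * ((i : ℤ) + 1)))

/- ### Auxiliary machinery -/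

/-- Single-monomial Laurent polynomials. -/
noncomputable def sg (n : ℤ) (M : M3) : L := AddMonoidAlgebra.single n M

lemma CT (M : M3) (n : ℤ) : (C M * T n : L) = sg n M :=
  (single_eq_C_mul_T M n).symm

lemma sg_mul (n m : ℤ) (M N : M3) : sg n M * sg m N = sg (n+m) (M*N) :=
  AddMonoidAlgebra.single_mul_single n m M N

lemma sg_apply (n : ℤ) (M : M3) (j : ℤ) : (sg n M).coeff j = if n = j then M else 0 :=
  Finsupp.single_apply

lemma Lsub (x y : L) (j : ℤ) : (x - y).coeff j = x.coeff j - y.coeff j := Finsupp.sub_apply _ _ _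
lemma Ladd (x y : L) (j : ℤ) : (x + y).coeff j = x.coeff j + y.coeff j := Finsupp.add_apply _ _ _
lemma Lneg (x : L) (j : ℤ) : (-x).coeff j = - (x.coeff j) := Finsupp.neg_apply _ _
lemma Lzero (j : ℤ) : (0 : L).coeff j = 0 := rfl

lemma Q_neg (n : ℕ) : Q (-((n:ℤ)+1)) =
    ∑ i ∈ Finset.range (n+1), sg (-(2*((i:ℤ)+1))) ((Xinv*Yinv)^(i+1)) := by
  rw [Q, if_neg (by omega)]
  have h : (-(-((n:ℤ)+1))).toNat = n + 1 := by omega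
  rw [h]
  simp_rw [CT]

/-- The Laurent polynomial of the theorem. -/
noncomputable def fk (k : ℕ) : L :=
  C Yinv * T (-1) *
      ((1 - C Ym * T 1) * Q (-(3 * k + 1)) * (C Ym * T 1)
        - C ((Xinv * Yinv) ^ (3 * k + 1)) * T (-(6 * k + 2))) *
      (1 - C Xm * T 1)

/-- The value of `fk 0`. -/
noncomputable def bs : L :=
  sg 0 1 + sg (-1) (-(Xinv+Yinv)) + sg (-2) (-(Xm+Ym)) + sg (-3) (-(Xm*Ym*Xm))

/-- The increment `fk (k+1) - fk k`. -/
noncomputable def dl (s : ℕ) : L :=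
  sg (-(6*(s:ℤ))-3) (-(Xm*Ym*Xm)) + sg (-(6*(s:ℤ))-4) (-(Xinv+Yinv)) + sg (-(6*(s:ℤ))-5) (-(Xm+Ym))
  + sg (-(6*(s:ℤ))-6) (2 : M3) + sg (-(6*(s:ℤ))-7) (-(Xinv+Yinv)) + sg (-(6*(s:ℤ))-8) (-(Xm+Ym))
  + sg (-(6*(s:ℤ))-9) (-(Xm*Ym*Xm))

set_option maxHeartbeats 1000000 in
lemma fk_zero : fk 0 = bs := by
  have h : (-(3 * ((0:ℕ):ℤ) + 1)) = -(((0:ℕ):ℤ)+1) := by norm_num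
  rw [fk, h, Q_neg 0]
  simp only [zero_add, Finset.sum_range_one, CT, sub_mul, mul_sub, one_mul, mul_one, sg_mul]
  refine LaurentPolynomial.ext fun j => ?_
  simp only [bs, Lsub, Ladd, Lneg, sg_apply]
  split_ifs <;> first | (exfalso; omega) | decide

lemma B3 : (Xinv * Yinv)^3 = 1 := by decide

lemma pw (n r : ℕ) : (Xinv*Yinv)^(3*n+r) = (Xinv*Yinv)^r := by
  rw [pow_add, pow_mul, B3, one_pow, one_mul]

lemma ring_id (A U V W W' S e1 e2 e3 Xb : L) :
    A * (U * (S + e1 + e2 + e3) * V - W') * Xb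
      = A * (U * S * V - W) * Xb + A * (U * (e1 + e2 + e3) * V + (W - W')) * Xb := by
  simp only [mul_add, add_mul, mul_sub, sub_mul, mul_assoc]
  abel

set_option maxHeartbeats 4000000 in
lemma fk_succ (k : ℕ) : fk (k+1) = fk k + dl k := by
  have h1 : (-(3 * (((k+1):ℕ):ℤ) + 1)) = -(((3*k+3:ℕ):ℤ)+1) := by push_cast; ring
  have hk : (-(3 * ((k:ℕ):ℤ) + 1)) = -(((3*k:ℕ):ℤ)+1) := by push_cast; ring
  have h2 : 3*k+3+1 = (3*k+1)+1+1+1 := by ring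
  have p1 : (Xinv*Yinv)^((3*k+1)+1) = (Xinv*Yinv)^2 := by
    rw [show (3*k+1)+1 = 3*k+2 from by ring, pw]
  have p2 : (Xinv*Yinv)^((3*k+1)+1+1) = 1 := by
    rw [show (3*k+1)+1+1 = 3*(k+1)+0 from by ring, pw, pow_zero]
  have p3 : (Xinv*Yinv)^((3*k+1)+1+1+1) = (Xinv*Yinv)^1 := by
    rw [show (3*k+1)+1+1+1 = 3*(k+1)+1 from by ring, pw]
  have p4 : (Xinv*Yinv)^(3*(k+1)+1) = (Xinv*Yinv)^1 := pw (k+1) 1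
  have p5 : (Xinv*Yinv)^(3*k+1) = (Xinv*Yinv)^1 := pw k 1
  rw [fk, fk, h1, hk, Q_neg (3*k+3), Q_neg (3*k), h2, Finset.sum_range_succ,
    Finset.sum_range_succ, Finset.sum_range_succ, p1, p2, p3, p4, p5,
    ring_id (W := C ((Xinv*Yinv)^1) * T (-(6 * ((k:ℕ):ℤ) + 2)))]
  congr 1
  simp only [CT, sub_mul, mul_sub, mul_add, add_mul, one_mul, mul_one, sg_mul]
  refine LaurentPolynomial.ext fun j => ?_
  simp only [dl, Lsub, Ladd, Lneg, sg_apply]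
  push_cast
  ring_nf
  split_ifs <;> first | (exfalso; omega) | decide

lemma fk_eq (k : ℕ) : fk k = bs + ∑ s ∈ Finset.range k, dl s := by
  induction k with
  | zero => simpa using fk_zero
  | succ n ih => rw [fk_succ, ih, Finset.sum_range_succ, add_assoc]

lemma isTwin_add {f g : L} (hf : IsTwin f) (hg : IsTwin g) : IsTwin (f + g) := by
  obtain ⟨c, c', a, b, h0, h1, h2, h3⟩ := hf
  obtain ⟨d, d', e, e', g0, g1, g2, g3⟩ := hg
  refine ⟨fun j => c j + d j, fun j => c' j + d' j, fun j => a j + e j, fun j => b j + e' j,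
    fun j hj => ?_, fun j hj => ?_, fun j hj => ?_, fun j => by
      show a (3*j+1) + e (3*j+1) = b (3*j+2) + e' (3*j+2)
      rw [h3, g3]⟩
  · rw [Ladd, h0 j hj, g0 j hj, add_smul, add_smul]; abel
  · rw [Ladd, h1 j hj, g1 j hj, add_smul]
  · rw [Ladd, h2 j hj, g2 j hj, add_smul]

lemma isTwin_zero : IsTwin (0 : L) := by
  refine ⟨0, 0, 0, 0, ?_, ?_, ?_, fun j => rfl⟩ <;>
    intro j hj <;> simp [Lzero]

lemma isTwin_sum (F : ℕ → L) (h : ∀ s, IsTwin (F s)) (n : ℕ) :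
    IsTwin (∑ s ∈ Finset.range n, F s) := by
  induction n with
  | zero => simpa using isTwin_zero
  | succ n ih => rw [Finset.sum_range_succ]; exact isTwin_add ih (h n)

set_option maxHeartbeats 1000000 in
lemma isTwin_bs : IsTwin bs := by
  refine ⟨fun j => if j = 0 then 1 else 0, fun j => if j = -3 then -1 else 0,
    fun j => if j = -2 then -1 else 0, fun j => if j = -1 then -1 else 0,
    ?_, ?_, ?_, ?_⟩
  · intro j hj
    simp only [bs, Ladd, sg_apply]
    split_ifs <;> first | (exfalso; omega) | decide
  · intro j hj
    simp only [bs, Ladd, sg_apply]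
    split_ifs <;> first | (exfalso; omega) | decide
  · intro j hj
    simp only [bs, Ladd, sg_apply]
    split_ifs <;> first | (exfalso; omega) | decide
  · intro j
    show (if (3*j+1 : ℤ) = -2 then (-1:ℤ) else 0) = (if (3*j+2 : ℤ) = -1 then (-1:ℤ) else 0)
    split_ifs <;> first | rfl | (exfalso; omega)

set_option maxHeartbeats 2000000 in
lemma isTwin_dl (s : ℕ) : IsTwin (dl s) := by
  refine ⟨fun j => if j = -(6*(s:ℤ))-6 then 2 else 0,
    fun j => if j = -(6*(s:ℤ))-3 ∨ j = -(6*(s:ℤ))-9 then -1 else 0,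
    fun j => if j = -(6*(s:ℤ))-5 ∨ j = -(6*(s:ℤ))-8 then -1 else 0,
    fun j => if j = -(6*(s:ℤ))-4 ∨ j = -(6*(s:ℤ))-7 then -1 else 0,
    ?_, ?_, ?_, ?_⟩
  · intro j hj
    simp only [dl, Ladd, sg_apply]
    split_ifs <;> first | (exfalso; omega) | decide
  · intro j hj
    simp only [dl, Ladd, sg_apply]
    split_ifs <;> first | (exfalso; omega) | decide
  · intro j hj
    simp only [dl, Ladd, sg_apply]
    split_ifs <;> first | (exfalso; omega) | decide
  · intro j
    show (if (3*j+1 : ℤ) = -(6*(s:ℤ))-5 ∨ (3*j+1 : ℤ) = -(6*(s:ℤ))-8 then (-1:ℤ) else 0)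
        = (if (3*j+2 : ℤ) = -(6*(s:ℤ))-4 ∨ (3*j+2 : ℤ) = -(6*(s:ℤ))-7 then (-1:ℤ) else 0)
    split_ifs <;> first | rfl | (exfalso; omega)

/-- For every `k ≥ 0`,
`Y⁻¹t⁻¹·[(I − Yt)·Q_{−(3k+1)}(t)·Yt − (X⁻¹Y⁻¹)^{3k+1}·t^{−(6k+2)}]·(I − Xt)` is twin. -/
theorem stmt_11 (k : ℕ) :
    IsTwin (C Yinv * T (-1) *
      ((1 - C Ym * T 1) * Q (-(3 * k + 1)) * (C Ym * T 1)
        - C ((Xinv * Yinv) ^ (3 * k + 1)) * T (-(6 * k + 2))) *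
      (1 - C Xm * T 1)) := by
  show IsTwin (fk k)
  rw [fk_eq]
  exact isTwin_add isTwin_bs (isTwin_sum _ isTwin_dl k)
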